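/- Let R be an integral domain with trivial Picard group (every invertible ideal of R is principal) and let a be an irreducible element of R. Then the principal ideal (a) is a molecule of R. -/

import Mathlib

/-- In a domain with trivial Picard group (every invertible ideal is principal),
the principal ideal generated by an irreducible element is a molecule. -/
theorem stmt_1 {R : Type*} [CommRing R] [IsDomain R]
    (hPic : ∀ I : Ideal R,
      IsUnit (I : FractionalIdeal (nonZeroDivisors R) (FractionRing R)) →
        Submodule.IsPrincipal I)
    (a : R) (ha : Irreducible a) :
    Ideal.span ({a} : Set R) ≠ ⊥ ∧ Ideal.span ({a} : Set R) ≠ ⊤ ∧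
      ∀ J K : Ideal R, Ideal.span ({a} : Set R) = J * K → J = ⊤ ∨ K = ⊤ := by
  have ha0 : a ≠ 0 := ha.ne_zero
  refine ⟨by simpa [Ideal.span_singleton_eq_bot] using ha0,
    by simpa [Ideal.span_singleton_eq_top] using ha.not_isUnit, ?_⟩
  intro J K hJK
  set F := FractionRing R
  have hainj : (algebraMap R F) a ≠ 0 := by
    simpa using (IsFractionRing.to_map_eq_zero_iff (K := F)).not.mpr ha0
  -- (a) is a unit as a fractional ideal
  have hunit : IsUnit ((Ideal.span ({a} : Set R) : Ideal R) :
      FractionalIdeal (nonZeroDivisors R) F) := by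
    rw [FractionalIdeal.coeIdeal_span_singleton]
    exact IsUnit.of_mul_eq_one (FractionalIdeal.spanSingleton _ ((algebraMap R F) a)⁻¹)
      (by rw [FractionalIdeal.spanSingleton_mul_spanSingleton, mul_inv_cancel₀ hainj,
        FractionalIdeal.spanSingleton_one])
  rw [hJK, FractionalIdeal.coeIdeal_mul] at hunit
  have hJu := isUnit_of_mul_isUnit_left hunit
  have hKu := isUnit_of_mul_isUnit_right hunit
  obtain ⟨b, hb⟩ := hPic J hJu
  obtain ⟨c, hc⟩ := hPic K hKu
  rw [hb, hc] at hJK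
  rw [Ideal.submodule_span_eq, Ideal.submodule_span_eq,
    Ideal.span_singleton_mul_span_singleton] at hJK
  have : Associated a (b * c) :=
    (Ideal.span_singleton_eq_span_singleton).mp hJK
  obtain ⟨u, hu⟩ := this.symm
  have := ha.isUnit_or_isUnit (show a = b * (c * u) by rw [← hu]; ring)
  rcases this with hbu | hcu
  · left; rw [hb, Ideal.submodule_span_eq, Ideal.span_singleton_eq_top]; exact hbu
  · right; rw [hc, Ideal.submodule_span_eq, Ideal.span_singleton_eq_top]
    exact (isUnit_of_mul_isUnit_left hcu)
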